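/- Let (λ_{ab})_{0 ≤ a,b ≤ 2} be real numbers such that Σ_{a,b=0}^{2} λ_{ab} ω_a ω_b = 0 for every ω = (ω₀, ω₁, ω₂) ∈ ℝ³ with ω₀² − ω₁² − ω₂² = 1. Then λ_{ab} + λ_{ba} = 0 for all 0 ≤ a, b ≤ 2; in particular the quadratic form Σ_{a,b=0}^{2} λ_{ab} X_a X_b vanishes identically on ℝ³. -/

import Mathlib

/-- if the quadratic form `Σ_{a,b} λ_{ab} ω_a ω_b` vanishes on
the unit hyperboloid `ω₀² − ω₁² − ω₂² = 1`, then `λ_{ab} + λ_{ba} = 0` for all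
`a, b`; in particular the quadratic form vanishes identically on `ℝ³`. -/
theorem quadratic_form_vanishing_on_hyperboloid (lam : Fin 3 → Fin 3 → ℝ)
    (h : ∀ ω : Fin 3 → ℝ, (ω 0) ^ 2 - (ω 1) ^ 2 - (ω 2) ^ 2 = 1 →
      ∑ a : Fin 3, ∑ b : Fin 3, lam a b * ω a * ω b = 0) :
    (∀ a b : Fin 3, lam a b + lam b a = 0) ∧
      ∀ X : Fin 3 → ℝ, ∑ a : Fin 3, ∑ b : Fin 3, lam a b * X a * X b = 0 := by
  have hs2 : (Real.sqrt 2) ^ 2 = 2 := Real.sq_sqrt (by norm_num)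
  have hs3 : (Real.sqrt 3) ^ 2 = 3 := Real.sq_sqrt (by norm_num)
  have hs2' : Real.sqrt 2 * Real.sqrt 2 = 2 := by nlinarith
  have hs3' : Real.sqrt 3 * Real.sqrt 3 = 3 := by nlinarith
  have hs2pos : (0:ℝ) < Real.sqrt 2 := Real.sqrt_pos.mpr (by norm_num)
  have h1 := h ![1, 0, 0] (by simp)
  have h2 := h ![Real.sqrt 2, 1, 0] (by simp [hs2]; norm_num)
  have h3 := h ![Real.sqrt 2, -1, 0] (by simp [hs2]; norm_num)
  have h4 := h ![Real.sqrt 2, 0, 1] (by simp [hs2]; norm_num)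
  have h5 := h ![Real.sqrt 2, 0, -1] (by simp [hs2]; norm_num)
  have h6 := h ![Real.sqrt 3, 1, 1] (by simp [hs3]; norm_num)
  simp [Fin.sum_univ_three] at h1 h2 h3 h4 h5 h6
  have e00 : lam 0 0 = 0 := by linarith
  have e11 : lam 1 1 = 0 := by nlinarith
  have e22 : lam 2 2 = 0 := by nlinarith
  have e01 : lam 0 1 + lam 1 0 = 0 := by
    have h' : Real.sqrt 2 * (lam 0 1 + lam 1 0) = 0 := by linear_combination (h2 - h3) / 2
    rcases mul_eq_zero.mp h' with h'' | h''
    · linarith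
    · exact h''
  have e02 : lam 0 2 + lam 2 0 = 0 := by
    have h' : Real.sqrt 2 * (lam 0 2 + lam 2 0) = 0 := by linear_combination (h4 - h5) / 2
    rcases mul_eq_zero.mp h' with h'' | h''
    · linarith
    · exact h''
  have e12 : lam 1 2 + lam 2 1 = 0 := by
    linear_combination h6 - lam 0 0 * hs3' - 3 * e00 - Real.sqrt 3 * e01
      - Real.sqrt 3 * e02 - e11 - e22
  refine ⟨?_, ?_⟩
  · intro a b
    fin_cases a <;> fin_cases b
    · show lam 0 0 + lam 0 0 = 0; linarith
    · show lam 0 1 + lam 1 0 = 0; linarith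
    · show lam 0 2 + lam 2 0 = 0; linarith
    · show lam 1 0 + lam 0 1 = 0; linarith
    · show lam 1 1 + lam 1 1 = 0; linarith
    · show lam 1 2 + lam 2 1 = 0; linarith
    · show lam 2 0 + lam 0 2 = 0; linarith
    · show lam 2 1 + lam 1 2 = 0; linarith
    · show lam 2 2 + lam 2 2 = 0; linarith
  · intro X
    simp only [Fin.sum_univ_three]
    linear_combination (X 0 * X 0) * e00 + (X 1 * X 1) * e11 + (X 2 * X 2) * e22
      + (X 0 * X 1) * e01 + (X 0 * X 2) * e02 + (X 1 * X 2) * e12
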